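/- For every integer n ≥ 1 and every real z with z > 2, the series ∑_{k=0}^∞ (1/(n+2k)) · C(n+2k, k) · z^{−(n+2k)} converges absolutely and equals (1/n) · ((z − √(z²−4))/2)^n. -/

import Mathlib

open Filter

private lemma aux_choose_le_two_pow (N k : ℕ) : N.choose k ≤ 2 ^ N := by
  rcases le_or_gt k N with h | h
  · calc N.choose k ≤ ∑ i ∈ Finset.range (N + 1), N.choose i :=
        Finset.single_le_sum (fun i _ => Nat.zero_le _)
          (Finset.mem_range.2 (Nat.lt_succ_of_le h))
      _ = 2 ^ N := Nat.sum_range_choose N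
  · simp [Nat.choose_eq_zero_of_lt h]

/-- The auxiliary generating function `B_m(z) = ∑ₖ C(m+2k,k) z^{-(m+2k)}`. -/
noncomputable def auxB (z : ℝ) (m : ℕ) : ℝ :=
  ∑' k : ℕ, ((m + 2 * k).choose k : ℝ) * z⁻¹ ^ (m + 2 * k)

private lemma aux_term_le {z : ℝ} (hz : 2 < z) (m k : ℕ) :
    ((m + 2 * k).choose k : ℝ) * z⁻¹ ^ (m + 2 * k) ≤
      (2 * z⁻¹) ^ m * ((2 * z⁻¹) ^ 2) ^ k := by
  have hz0 : (0:ℝ) < z := by linarith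
  have hr : (0:ℝ) < z⁻¹ := by positivity
  calc ((m + 2 * k).choose k : ℝ) * z⁻¹ ^ (m + 2 * k)
      ≤ (2:ℝ) ^ (m + 2 * k) * z⁻¹ ^ (m + 2 * k) := by
        have hb : ((m + 2 * k).choose k : ℝ) ≤ (2:ℝ) ^ (m + 2 * k) := by
          exact_mod_cast aux_choose_le_two_pow (m + 2 * k) k
        have : (0:ℝ) ≤ z⁻¹ ^ (m + 2 * k) := by positivity
        exact mul_le_mul_of_nonneg_right hb this
    _ = (2 * z⁻¹) ^ m * ((2 * z⁻¹) ^ 2) ^ k := by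
        rw [← mul_pow, pow_add, pow_mul]

private lemma aux_two_inv_lt_one {z : ℝ} (hz : 2 < z) : 2 * z⁻¹ < 1 := by
  have hz0 : (0:ℝ) < z := by linarith
  rw [← div_eq_mul_inv, div_lt_one hz0]; exact hz

private lemma aux_summable {z : ℝ} (hz : 2 < z) (m : ℕ) :
    Summable (fun k : ℕ => ((m + 2 * k).choose k : ℝ) * z⁻¹ ^ (m + 2 * k)) := by
  have hz0 : (0:ℝ) < z := by linarith
  have h1 : (2 * z⁻¹) ^ 2 < 1 := by
    have := aux_two_inv_lt_one hz
    nlinarith [inv_pos.2 hz0]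
  refine Summable.of_nonneg_of_le (fun k => by positivity) (aux_term_le hz m)
    ((summable_geometric_of_lt_one (by positivity) h1).mul_left _)

private lemma aux_hasSum {z : ℝ} (hz : 2 < z) (m : ℕ) :
    HasSum (fun k : ℕ => ((m + 2 * k).choose k : ℝ) * z⁻¹ ^ (m + 2 * k)) (auxB z m) :=
  (aux_summable hz m).hasSum

private lemma auxB_rec {z : ℝ} (hz : 2 < z) (m : ℕ) :
    auxB z (m + 2) = z * auxB z (m + 1) - auxB z m := by
  have hz0 : z ≠ 0 := by positivity
  set d : ℕ → ℝ := fun k =>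
    z * (((m + 1 + 2 * k).choose k : ℝ) * z⁻¹ ^ (m + 1 + 2 * k)) -
      ((m + 2 * k).choose k : ℝ) * z⁻¹ ^ (m + 2 * k) with hd_def
  have hd : HasSum d (z * auxB z (m + 1) - auxB z m) :=
    ((aux_hasSum hz (m + 1)).mul_left z).sub (aux_hasSum hz m)
  have hd0 : d 0 = 0 := by
    simp only [hd_def, Nat.mul_zero, Nat.add_zero, Nat.choose_zero_right, Nat.cast_one,
      one_mul, pow_succ]
    field_simp
    ring
  have hdk : ∀ k, d (k + 1) = ((m + 2 + 2 * k).choose k : ℝ) * z⁻¹ ^ (m + 2 + 2 * k) := by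
    intro k
    have e1 : m + 1 + 2 * (k + 1) = (m + 2 * k + 2) + 1 := by ring
    have e2 : m + 2 * (k + 1) = m + 2 * k + 2 := by ring
    have e3 : m + 2 + 2 * k = m + 2 * k + 2 := by ring
    have hp : ((m + 2 * k + 2 + 1).choose (k + 1) : ℝ) =
        ((m + 2 * k + 2).choose k : ℝ) + ((m + 2 * k + 2).choose (k + 1) : ℝ) := by
      exact_mod_cast congrArg (Nat.cast (R := ℝ)) (Nat.choose_succ_succ' (m + 2 * k + 2) k)
    simp only [hd_def, e1, e2, e3, hp, pow_succ]
    field_simp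
    ring
  have hshift : HasSum (fun k => d (k + 1)) (z * auxB z (m + 1) - auxB z m) := by
    refine (hasSum_nat_add_iff 1).2 ?_
    simpa [hd0] using hd
  have hfun : (fun k => d (k + 1)) =
      fun k : ℕ => ((m + 2 + 2 * k).choose k : ℝ) * z⁻¹ ^ (m + 2 + 2 * k) := funext hdk
  rw [hfun] at hshift
  exact hshift.tsum_eq

private lemma auxB_one {z : ℝ} (hz : 2 < z) : auxB z 1 = z / 2 * (auxB z 0 - 1) := by
  have hz0 : z ≠ 0 := by positivity
  have hsh : HasSum (fun k : ℕ => ((0 + 2 * (k + 1)).choose (k + 1) : ℝ) * z⁻¹ ^ (0 + 2 * (k + 1)))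
      (auxB z 0 - 1) := by
    refine (hasSum_nat_add_iff
      (f := fun k : ℕ => ((0 + 2 * k).choose k : ℝ) * z⁻¹ ^ (0 + 2 * k)) 1).2 ?_
    have h0 : ((0 + 2 * 0).choose 0 : ℝ) * z⁻¹ ^ (0 + 2 * 0) = 1 := by norm_num
    simpa [h0] using aux_hasSum hz 0
  have hmul : HasSum (fun k : ℕ => (2 * z⁻¹) * (((1 + 2 * k).choose k : ℝ) * z⁻¹ ^ (1 + 2 * k)))
      (2 * z⁻¹ * auxB z 1) := (aux_hasSum hz 1).mul_left _
  have hfun : (fun k : ℕ => ((0 + 2 * (k + 1)).choose (k + 1) : ℝ) * z⁻¹ ^ (0 + 2 * (k + 1))) =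
      fun k : ℕ => (2 * z⁻¹) * (((1 + 2 * k).choose k : ℝ) * z⁻¹ ^ (1 + 2 * k)) := by
    funext k
    have e1 : 0 + 2 * (k + 1) = (2 * k + 1) + 1 := by ring
    have e2 : 1 + 2 * k = 2 * k + 1 := by ring
    have hc : ((2 * k + 1 + 1).choose (k + 1) : ℝ) = 2 * ((2 * k + 1).choose k : ℝ) := by
      have := Nat.choose_succ_succ' (2 * k + 1) k
      have h2 := Nat.choose_symm_half k
      push_cast [this, h2]
      ring
    rw [e1, e2, hc, pow_succ]
    ring
  rw [hfun] at hsh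
  have := hsh.unique hmul
  field_simp at this ⊢
  linarith [this]

private lemma auxB_nonneg {z : ℝ} (hz : 2 < z) (m : ℕ) : 0 ≤ auxB z m :=
  tsum_nonneg fun k => by positivity

private lemma auxB_le {z : ℝ} (hz : 2 < z) (m : ℕ) :
    auxB z m ≤ (2 * z⁻¹) ^ m * (1 - (2 * z⁻¹) ^ 2)⁻¹ := by
  have hz0 : (0:ℝ) < z := by linarith
  have h1 : (2 * z⁻¹) ^ 2 < 1 := by
    have := aux_two_inv_lt_one hz
    nlinarith [inv_pos.2 hz0]
  have hgeo : Summable (fun k : ℕ => ((2 * z⁻¹) ^ 2) ^ k) :=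
    summable_geometric_of_lt_one (by positivity) h1
  calc auxB z m ≤ ∑' k : ℕ, (2 * z⁻¹) ^ m * ((2 * z⁻¹) ^ 2) ^ k :=
      (aux_summable hz m).tsum_le_tsum (aux_term_le hz m) (hgeo.mul_left _)
    _ = (2 * z⁻¹) ^ m * (1 - (2 * z⁻¹) ^ 2)⁻¹ := by
      rw [tsum_mul_left, tsum_geometric_of_lt_one (by positivity) h1]

private lemma auxB_tendsto {z : ℝ} (hz : 2 < z) :
    Filter.Tendsto (auxB z) Filter.atTop (nhds 0) := by
  have hz0 : (0:ℝ) < z := by linarith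
  have h2r := aux_two_inv_lt_one hz
  have hlim : Filter.Tendsto (fun m : ℕ => (2 * z⁻¹) ^ m * (1 - (2 * z⁻¹) ^ 2)⁻¹)
      Filter.atTop (nhds 0) := by
    have := tendsto_pow_atTop_nhds_zero_of_lt_one (by positivity : (0:ℝ) ≤ 2 * z⁻¹) h2r
    simpa using this.mul_const _
  exact squeeze_zero (fun m => auxB_nonneg hz m) (fun m => auxB_le hz m) hlim

private lemma aux_one_le_pow {v : ℝ} (hv : 1 ≤ v) (j : ℕ) : 1 ≤ v ^ j := by
  induction j with
  | zero => simp
  | succ j ih => rw [pow_succ]; nlinarith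

private lemma auxB_eq {z : ℝ} (hz : 2 < z) (m : ℕ) :
    auxB z m = z / Real.sqrt (z ^ 2 - 4) * ((z - Real.sqrt (z ^ 2 - 4)) / 2) ^ m := by
  have hz0 : (0:ℝ) < z := by linarith
  set s : ℝ := Real.sqrt (z ^ 2 - 4) with hs_def
  have hD : (0:ℝ) < z ^ 2 - 4 := by nlinarith
  have hs0 : 0 < s := Real.sqrt_pos.2 hD
  have hs2 : s ^ 2 = z ^ 2 - 4 := Real.sq_sqrt hD.le
  have hsz : s < z := by nlinarith
  set w : ℝ := (z - s) / 2 with hw_def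
  set v : ℝ := (z + s) / 2 with hv_def
  have hw0 : 0 < w := by simp only [hw_def]; linarith
  have hwv : w * v = 1 := by simp only [hw_def, hv_def]; nlinarith
  have hv1 : 1 < v := by simp only [hv_def]; linarith
  have hw1 : w < 1 := by nlinarith
  have hw2 : w ^ 2 = z * w - 1 := by simp only [hw_def]; nlinarith
  set E : ℕ → ℝ := fun m => auxB z m - z / s * w ^ m with hE_def
  have hErec : ∀ j, E (j + 2) = z * E (j + 1) - E j := by
    intro j
    simp only [hE_def, auxB_rec hz j]
    have hpow : w ^ (j + 2) = z * w ^ (j + 1) - w ^ j := by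
      have : w ^ (j + 2) = w ^ j * w ^ 2 := by ring
      rw [this, hw2]; ring
    rw [hpow]; ring
  set F : ℕ → ℝ := fun j => E (j + 1) - w * E j with hF_def
  have hFrec : ∀ j, F (j + 1) = v * F j := by
    intro j
    simp only [hF_def, hErec j]
    have hzwv : z = w + v := by simp only [hw_def, hv_def]; ring
    linear_combination E (j + 1) * hzwv + E j * hwv
  have hFpow : ∀ j, F j = v ^ j * F 0 := by
    intro j
    induction j with
    | zero => simp
    | succ j ih => rw [hFrec j, ih, pow_succ]; ring
  have hEtend : Filter.Tendsto E Filter.atTop (nhds 0) := by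
    have h1 : Filter.Tendsto (fun j : ℕ => z / s * w ^ j) Filter.atTop (nhds 0) := by
      have := tendsto_pow_atTop_nhds_zero_of_lt_one hw0.le hw1
      simpa using this.const_mul (z / s)
    simpa using (auxB_tendsto hz).sub h1
  have hFtend : Filter.Tendsto F Filter.atTop (nhds 0) := by
    have h1 : Filter.Tendsto (fun j : ℕ => E (j + 1)) Filter.atTop (nhds 0) :=
      hEtend.comp (Filter.tendsto_add_atTop_nat 1)
    simpa using h1.sub (hEtend.const_mul w)
  have hF0 : F 0 = 0 := by
    have hle : ∀ j, |F 0| ≤ |F j| := by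
      intro j
      rw [hFpow j, abs_mul]
      have hv0 : (0:ℝ) ≤ v ^ j := by positivity
      have : (1:ℝ) ≤ v ^ j := aux_one_le_pow hv1.le j
      calc |F 0| = 1 * |F 0| := by ring
        _ ≤ v ^ j * |F 0| := by
            have := abs_nonneg (F 0)
            nlinarith
        _ = |v ^ j| * |F 0| := by rw [abs_of_nonneg hv0]
    have habs : Filter.Tendsto (fun j => |F j|) Filter.atTop (nhds 0) := by
      simpa using hFtend.abs
    have : |F 0| ≤ 0 := le_of_tendsto_of_tendsto' tendsto_const_nhds habs hle
    have := abs_nonneg (F 0)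
    have : |F 0| = 0 := le_antisymm ‹|F 0| ≤ 0› ‹0 ≤ |F 0|›
    exact abs_eq_zero.1 this
  have hFall : ∀ j, F j = 0 := fun j => by rw [hFpow j, hF0]; ring
  have hEstep : ∀ j, E (j + 1) = w * E j := by
    intro j
    have := hFall j
    simp only [hF_def] at this
    linarith
  have hE0 : E 0 = 0 := by
    have h1 : E 1 = w * E 0 := hEstep 0
    have h2 := auxB_one hz
    simp only [hE_def, pow_one, pow_zero, mul_one] at h1
    have h3 : auxB z 1 = w * auxB z 0 := by linarith [h1]
    have h4 : z / 2 - w = s / 2 := by simp only [hw_def]; ring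
    have h5 : auxB z 0 * (s / 2) = z / 2 := by nlinarith [h2, h3]
    have h6 : auxB z 0 = z / s := by
      field_simp at h5 ⊢
      linarith
    simp only [hE_def, pow_zero, mul_one]
    rw [h6]; ring
  have hEall : ∀ j, E j = 0 := by
    intro j
    induction j with
    | zero => exact hE0
    | succ j ih => rw [hEstep j, ih]; ring
  have := hEall m
  simp only [hE_def] at this
  linarith

private lemma aux_choose_real (p k : ℕ) :
    ((p:ℝ) + 2*k + 3) * (((p + 2*k + 2).choose (k+1) : ℕ) : ℝ) =
      ((p:ℝ) + 1) * (((p + 2*k + 3).choose (k+1) : ℕ) : ℝ) +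
        ((p:ℝ) + 2*k + 3) * (((p + 2*k + 2).choose k : ℕ) : ℝ) := by
  have h1 := Nat.add_one_mul_choose_eq (p + 2*k + 2) k
  have h2 := Nat.choose_mul_succ_eq (p + 2*k + 2) (k + 1)
  have h3 : p + 2*k + 2 + 1 - (k + 1) = p + k + 2 := by omega
  rw [h3] at h2
  have h1' : ((p:ℝ) + 2*k + 3) * (((p + 2*k + 2).choose k : ℕ) : ℝ) =
      (((p + 2*k + 3).choose (k+1) : ℕ) : ℝ) * ((k:ℝ) + 1) := by
    have he : p + 2*k + 2 + 1 = p + 2*k + 3 := by omega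
    rw [he] at h1
    exact_mod_cast h1
  have h2' : (((p + 2*k + 2).choose (k+1) : ℕ) : ℝ) * ((p:ℝ) + 2*k + 3) =
      (((p + 2*k + 3).choose (k+1) : ℕ) : ℝ) * ((p:ℝ) + k + 2) := by
    have he : p + 2*k + 2 + 1 = p + 2*k + 3 := by omega
    rw [he] at h2
    exact_mod_cast h2
  linear_combination h2' - h1'

theorem series_eigenfunction_antiderivative (n : ℕ) (hn : 1 ≤ n) (z : ℝ) (hz : 2 < z) :
    Summable (fun k : ℕ =>
      (1 / (n + 2 * k) : ℝ) * ((n + 2 * k).choose k) * z ^ (-((n : ℤ) + 2 * k))) ∧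
    ∑' k : ℕ,
        (1 / (n + 2 * k) : ℝ) * ((n + 2 * k).choose k) * z ^ (-((n : ℤ) + 2 * k)) =
      (1 / n : ℝ) * ((z - Real.sqrt (z ^ 2 - 4)) / 2) ^ n := by
  obtain ⟨p, rfl⟩ : ∃ p, n = p + 1 := ⟨n - 1, by omega⟩
  have hz0 : (0:ℝ) < z := by linarith
  have hzne : z ≠ 0 := ne_of_gt hz0
  have he : ∀ k : ℕ, z ^ (-(((p+1 : ℕ) : ℤ) + 2 * (k : ℤ))) = z⁻¹ ^ (p + 1 + 2 * k) := by
    intro k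
    have hcast : (-(((p+1:ℕ) : ℤ) + 2 * (k:ℤ))) = -((p + 1 + 2*k : ℕ) : ℤ) := by push_cast; ring
    rw [hcast, zpow_neg, zpow_natCast, ← inv_pow]
  simp only [he]
  set u : ℕ → ℝ := fun k =>
    (1 / ((p:ℝ) + 1 + 2 * k)) * (((p + 1 + 2 * k).choose k : ℕ) : ℝ) * z⁻¹ ^ (p + 1 + 2 * k)
    with hu_def
  have hgf : (fun k : ℕ =>
      (1 / (((p+1:ℕ) : ℝ) + 2 * (k:ℕ))) * ((((p+1) + 2 * k).choose k : ℕ) : ℝ)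
        * z⁻¹ ^ (p + 1 + 2 * k)) = u := by
    funext k
    simp only [hu_def]
    push_cast
    ring
  rw [hgf]
  have hub : ∀ k, u k ≤ ((p + 1 + 2*k).choose k : ℝ) * z⁻¹ ^ (p + 1 + 2*k) := by
    intro k
    simp only [hu_def]
    have h1 : (1:ℝ) ≤ (p:ℝ) + 1 + 2*k := by
      have hp : (0:ℝ) ≤ (p:ℝ) := Nat.cast_nonneg p
      have hk : (0:ℝ) ≤ (k:ℝ) := Nat.cast_nonneg k
      linarith
    have h2 : (0:ℝ) ≤ ((p + 1 + 2*k).choose k : ℝ) * z⁻¹ ^ (p + 1 + 2*k) := by positivity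
    have h3 : 1 / ((p:ℝ) + 1 + 2*k) ≤ 1 := by
      rw [div_le_one (by linarith)]; linarith
    calc (1 / ((p:ℝ) + 1 + 2 * k)) * (((p + 1 + 2 * k).choose k : ℕ) : ℝ) * z⁻¹ ^ (p + 1 + 2 * k)
        = (1 / ((p:ℝ) + 1 + 2 * k)) *
            ((((p + 1 + 2 * k).choose k : ℕ) : ℝ) * z⁻¹ ^ (p + 1 + 2 * k)) := by ring
      _ ≤ 1 * ((((p + 1 + 2 * k).choose k : ℕ) : ℝ) * z⁻¹ ^ (p + 1 + 2 * k)) :=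
          mul_le_mul_of_nonneg_right h3 h2
      _ = _ := by ring
  have hsummable : Summable u :=
    Summable.of_nonneg_of_le (fun k => by simp only [hu_def]; positivity) hub
      (aux_summable hz (p+1))
  refine ⟨hsummable, ?_⟩
  have hS := hsummable.hasSum
  set S : ℝ := ∑' k, u k with hS_def
  set d : ℕ → ℝ := fun k =>
    ((p + 2*k).choose k : ℕ) * z⁻¹ ^ (p + 1 + 2*k) - ((p:ℝ) + 1) * u k with hd_def
  have hb : HasSum (fun k : ℕ => (((p + 2*k).choose k : ℕ) : ℝ) * z⁻¹ ^ (p + 1 + 2*k))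
      (z⁻¹ * auxB z p) := by
    have h := (aux_hasSum hz p).mul_left z⁻¹
    have hfe : (fun k : ℕ => z⁻¹ * ((((p + 2*k).choose k : ℕ) : ℝ) * z⁻¹ ^ (p + 2*k))) =
        fun k : ℕ => (((p + 2*k).choose k : ℕ) : ℝ) * z⁻¹ ^ (p + 1 + 2*k) := by
      funext k
      have e : p + 1 + 2*k = (p + 2*k) + 1 := by ring
      rw [e, pow_succ]
      ring
    rw [hfe] at h
    exact h
  have hd : HasSum d (z⁻¹ * auxB z p - ((p:ℝ) + 1) * S) := hb.sub (hS.mul_left _)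
  have hd0 : d 0 = 0 := by
    have hne : ((p:ℝ) + 1) ≠ 0 := by positivity
    simp only [hd_def, hu_def, Nat.mul_zero, Nat.add_zero, Nat.choose_zero_right, Nat.cast_zero,
      Nat.cast_one]
    field_simp
    ring
  have hdk : ∀ k, d (k + 1) =
      z⁻¹ * ((((p + 2 + 2*k).choose k : ℕ) : ℝ) * z⁻¹ ^ (p + 2 + 2*k)) := by
    intro k
    have hne : ((p:ℝ) + 2*k + 3) ≠ 0 := by positivity
    have e1 : p + 2*(k+1) = p + 2*k + 2 := by ring
    have e2 : p + 1 + 2*(k+1) = p + 2*k + 3 := by ring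
    have e5 : p + 2 + 2*k = p + 2*k + 2 := by ring
    have hA := aux_choose_real p k
    have hcoef : (((p + 2*k + 2).choose (k+1) : ℕ) : ℝ)
        - ((p:ℝ)+1) * (1 / ((p:ℝ) + 2*k + 3)) * (((p + 2*k + 3).choose (k+1) : ℕ) : ℝ)
        = (((p + 2*k + 2).choose k : ℕ) : ℝ) := by
      field_simp
      linear_combination hA
    simp only [hd_def, hu_def, e1, e2, e5]
    have hc2 : ((p:ℝ) + 1 + 2 * (((k:ℕ) + 1 : ℕ) : ℝ)) = (p:ℝ) + 2*k + 3 := by push_cast; ring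
    rw [hc2, show p + 2*k + 3 = (p + 2*k + 2) + 1 from by omega, pow_succ]
    linear_combination (z⁻¹ ^ (p + 2*k + 2) * z⁻¹) * hcoef
  have hshift : HasSum (fun k => d (k + 1)) (z⁻¹ * auxB z p - ((p:ℝ) + 1) * S) := by
    refine (hasSum_nat_add_iff (f := d) 1).2 ?_
    simpa [hd0] using hd
  have hB2 : HasSum (fun k : ℕ => z⁻¹ * ((((p + 2 + 2*k).choose k : ℕ) : ℝ) * z⁻¹ ^ (p + 2 + 2*k)))
      (z⁻¹ * auxB z (p + 2)) := (aux_hasSum hz (p+2)).mul_left z⁻¹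
  have hkey : z⁻¹ * auxB z p - ((p:ℝ) + 1) * S = z⁻¹ * auxB z (p + 2) := by
    have hfe : (fun k => d (k + 1)) =
        fun k : ℕ => z⁻¹ * ((((p + 2 + 2*k).choose k : ℕ) : ℝ) * z⁻¹ ^ (p + 2 + 2*k)) :=
      funext hdk
    rw [hfe] at hshift
    exact hshift.unique hB2
  set sq : ℝ := Real.sqrt (z ^ 2 - 4) with hsq_def
  have hD : (0:ℝ) < z ^ 2 - 4 := by nlinarith
  have hs0 : 0 < sq := Real.sqrt_pos.2 hD
  have hs2 : sq ^ 2 = z ^ 2 - 4 := Real.sq_sqrt hD.le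
  set w : ℝ := (z - sq) / 2 with hw_def
  have hBp := auxB_eq hz p
  have hBp2 := auxB_eq hz (p + 2)
  rw [← hsq_def, ← hw_def] at hBp hBp2
  rw [hBp, hBp2] at hkey
  have hw2 : 1 - w ^ 2 = w * sq := by
    simp only [hw_def]
    nlinarith
  have hsne : sq ≠ 0 := ne_of_gt hs0
  have hfin : ((p:ℝ) + 1) * S = w ^ (p + 1) := by
    have hthis : ((p:ℝ) + 1) * S = z⁻¹ * (z / sq * w ^ p) - z⁻¹ * (z / sq * w ^ (p + 2)) := by
      linarith [hkey]
    have hzz : z⁻¹ * z = 1 := inv_mul_cancel₀ hzne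
    have hss : sq⁻¹ * sq = 1 := inv_mul_cancel₀ hsne
    have hexp : w ^ (p + 2) = w ^ p * w ^ 2 := by ring
    have hexp1 : w ^ (p + 1) = w ^ p * w := by ring
    calc ((p:ℝ) + 1) * S = z⁻¹ * (z / sq * w ^ p) - z⁻¹ * (z / sq * w ^ (p + 2)) := hthis
      _ = (z⁻¹ * z) * sq⁻¹ * (w ^ p * (1 - w ^ 2)) := by rw [div_eq_mul_inv, hexp]; ring
      _ = sq⁻¹ * (w ^ p * (w * sq)) := by rw [hzz, hw2]; ring
      _ = (sq⁻¹ * sq) * (w ^ p * w) := by ring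
      _ = w ^ (p + 1) := by rw [hss, hexp1]; ring
  have hne : ((p:ℝ) + 1) ≠ 0 := by positivity
  have hgoal : S = (1 / ((p:ℝ) + 1)) * w ^ (p + 1) := by
    field_simp
    linarith [hfin]
  rw [hgoal]
  push_cast
  ring
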